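/- Assume 1 - f(l) ≤ d/(l+2)² for all l ∈ ℕ, where d > 0 and p·d·(1-γ)/γ < 1. Set q = 1/ln(γ/(p·d·(1-γ))). Then for every integer k ≥ 1 and all reals s, t ≥ 0 satisfying both (i) t·γ·(ln 2)/(1-γ) ≤ k - γ/(1-γ) and (ii) s·q·ln 2 + t·q·(ln 2)·(1 + 1/(1-γ)) ≤ k + q·(−1/(1-γ) + ln(1/(1-γ))), and every integer T with 1 ≤ T ≤ 2^t, it holds that w̄(k,T) ≤ 2^{-s}. -/

import Mathlib

open Finset

namespace CapAux

def esym (x : ℕ → ℝ) : ℕ → ℕ → ℝ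
  | 0, _ => 1
  | _+1, 0 => 0
  | g+1, i+1 => esym x (g+1) i + x i * esym x g i
  termination_by g i => (g, i)

def hsym (x : ℕ → ℝ) : ℕ → ℕ → ℝ
  | 0, _ => 1
  | m+1, 0 => x 0 * hsym x m 0
  | m+1, i+1 => hsym x (m+1) i + x (i+1) * hsym x m (i+1)
  termination_by m i => (m, i)

variable {x : ℕ → ℝ}

lemma esym_nonneg (hx : ∀ l, 0 ≤ x l) : ∀ g i, 0 ≤ esym x g i
  | 0, i => by rw [esym.eq_def]; norm_num
  | g+1, 0 => by rw [esym.eq_def]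
  | g+1, i+1 => by
    rw [esym]
    exact add_nonneg (esym_nonneg hx (g+1) i) (mul_nonneg (hx i) (esym_nonneg hx g i))
  termination_by g i => (g, i)

lemma hsym_nonneg (hx : ∀ l, 0 ≤ x l) : ∀ m i, 0 ≤ hsym x m i
  | 0, i => by rw [hsym.eq_def]; norm_num
  | m+1, 0 => by rw [hsym]; exact mul_nonneg (hx 0) (hsym_nonneg hx m 0)
  | m+1, i+1 => by
    rw [hsym]
    exact add_nonneg (hsym_nonneg hx (m+1) i) (mul_nonneg (hx (i+1)) (hsym_nonneg hx m (i+1)))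
  termination_by m i => (m, i)

lemma esym_succ (g i : ℕ) :
    esym x g (i+1) = esym x g i + x i * (if g = 0 then 0 else esym x (g-1) i) := by
  cases g <;> simp [esym]

lemma hsym_succ (m i : ℕ) :
    hsym x m (i+1) = hsym x m i + x (i+1) * (if m = 0 then 0 else hsym x (m-1) (i+1)) := by
  cases m <;> simp [hsym]

lemma hsym_zero : ∀ m, hsym x m 0 = x 0 ^ m
  | 0 => by simp [hsym]
  | m+1 => by rw [hsym, hsym_zero m, pow_succ]; ring

lemma esym_mono (hx : ∀ l, 0 ≤ x l) (g i : ℕ) : esym x g i ≤ esym x g (i+1) := by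
  rw [esym_succ]
  have : 0 ≤ x i * (if g = 0 then 0 else esym x (g-1) i) := by
    apply mul_nonneg (hx i)
    split
    · exact le_refl 0
    · exact esym_nonneg hx _ _
  linarith

lemma hsym_mono (hx : ∀ l, 0 ≤ x l) (m i : ℕ) : hsym x m i ≤ hsym x m (i+1) := by
  rw [hsym_succ]
  have : 0 ≤ x (i+1) * (if m = 0 then 0 else hsym x (m-1) (i+1)) := by
    apply mul_nonneg (hx (i+1))
    split
    · exact le_refl 0
    · exact hsym_nonneg hx _ _
  linarith

lemma esym_mono_le (hx : ∀ l, 0 ≤ x l) (g : ℕ) {i i' : ℕ} (hii : i ≤ i') :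
    esym x g i ≤ esym x g i' := by
  induction hii with
  | refl => exact le_refl _
  | step h ih => exact le_trans ih (esym_mono hx g _)

lemma hsym_mono_le (hx : ∀ l, 0 ≤ x l) (m : ℕ) {i i' : ℕ} (hii : i ≤ i') :
    hsym x m i ≤ hsym x m i' := by
  induction hii with
  | refl => exact le_refl _
  | step h ih => exact le_trans ih (hsym_mono hx m _)

lemma pow_add_le (S b : ℝ) (hS : 0 ≤ S) (hb : 0 ≤ b) :
    ∀ g : ℕ, S^(g+1) + (g+1) * S^g * b ≤ (S+b)^(g+1)
  | 0 => by norm_num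
  | g+1 => by
    have ih := pow_add_le S b hS hb g
    have hSb : 0 ≤ S + b := by linarith
    have h2 : (S+b) * (S^(g+1) + (g+1) * S^g * b) ≤ (S+b) * (S+b)^(g+1) :=
      mul_le_mul_of_nonneg_left ih hSb
    have hp : 0 ≤ S^g := pow_nonneg hS g
    have hexp : (S+b)^(g+1+1) = (S+b) * (S+b)^(g+1) := by ring
    rw [hexp]
    have e1 : S^(g+1) = S * S^g := by ring
    have key : (S+b) * (S^(g+1) + ((g:ℝ)+1) * S^g * b)
        = S^(g+1+1) + ((g:ℝ)+1+1)*S^(g+1)*b + ((g:ℝ)+1)*(S^g*b*b) := by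
      rw [e1]; ring
    have hnn : 0 ≤ ((g:ℝ)+1)*(S^g*b*b) := by positivity
    push_cast
    linarith [h2, key]

lemma two_log_le_A {u : ℝ} (hu : 0 ≤ u) :
    2 * Real.log (1+u) ≤ 2 * Real.log 2 * u + 1 := by
  have h1 : Real.log ((1+u) * (2/3)) ≤ (1+u) * (2/3) - 1 :=
    Real.log_le_sub_one_of_pos (by positivity)
  have h2 : Real.log ((1+u) * (2/3)) = Real.log (1+u) + Real.log (2/3) := by
    rw [Real.log_mul (by positivity) (by norm_num)]
  have h3 : Real.log (3/2) ≤ 1/2 := by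
    have := Real.log_le_sub_one_of_pos (show (0:ℝ) < 3/2 by norm_num)
    linarith
  have h4 : Real.log (2/3) = - Real.log (3/2) := by
    rw [show (2:ℝ)/3 = (3/2)⁻¹ by norm_num, Real.log_inv]
  have h5 : (0.6931471803 : ℝ) < Real.log 2 := Real.log_two_gt_d9
  nlinarith

lemma two_log_le_B {U : ℝ} (hU : 1 ≤ U) :
    2 * Real.log U ≤ Real.log 2 * (1 + U) + 1 := by
  have h1 : Real.log (U/3) ≤ U/3 - 1 := Real.log_le_sub_one_of_pos (by linarith)
  have h2 : Real.log (U/3) = Real.log U - Real.log 3 := by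
    rw [Real.log_div (by linarith) (by norm_num)]
  have h3 : Real.log 3 ≤ 2 * Real.log 2 := by
    have h6 : Real.log 3 ≤ Real.log 4 := Real.log_le_log (by norm_num) (by norm_num)
    have h4 : Real.log 4 = 2 * Real.log 2 := by
      rw [show (4:ℝ) = 2^2 by norm_num, Real.log_pow]; push_cast; ring
    linarith
  have h5 : (0.6931471803 : ℝ) < Real.log 2 := Real.log_two_gt_d9
  have h7 : Real.log 2 < 0.6931471808 := Real.log_two_lt_d9
  have h8 : (Real.log 2 - 2/3) * (U - 1) ≥ 0 := mul_nonneg (by linarith) (by linarith)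
  nlinarith

lemma theta_le_one (T : ℕ) : ∑ l ∈ Finset.range T, 1/((l:ℝ)+2)^2 ≤ 1 := by
  set f : ℕ → ℝ := fun n => 1/((n:ℝ)+1) with hf
  have h1 : ∀ l ∈ Finset.range T, 1/((l:ℝ)+2)^2 ≤ f l - f (l+1) := by
    intro l _
    have hl : (0:ℝ) < (l:ℝ)+1 := by positivity
    have e1 : f l - f (l+1) = 1/(((l:ℝ)+1)*((l:ℝ)+2)) := by
      simp only [hf]
      push_cast
      rw [div_sub_div _ _ (ne_of_gt hl) (by positivity)]
      rw [div_eq_div_iff (by positivity) (by positivity)]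
      ring
    rw [e1]
    apply one_div_le_one_div_of_le (by positivity)
    nlinarith
  have h2 := Finset.sum_range_sub' f T
  have h3 : ∑ l ∈ Finset.range T, (f l - f (l+1)) = f 0 - f T := h2
  have h4 : f T ≥ 0 := by positivity
  have h5 : f 0 = 1 := by norm_num [hf]
  calc ∑ l ∈ Finset.range T, 1/((l:ℝ)+2)^2
      ≤ ∑ l ∈ Finset.range T, (f l - f (l+1)) := Finset.sum_le_sum h1
    _ = f 0 - f T := h3
    _ ≤ 1 := by rw [h5]; linarith


def bsum (γ : ℝ) (x : ℕ → ℝ) (j i : ℕ) : ℝ :=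
  ∑ g ∈ Finset.range (j+1), γ^g * (1-γ)^(j-g) * esym x g i * hsym x (j-g) i

lemma bsum_rec (γ : ℝ) (x : ℕ → ℝ) (j i : ℕ) :
    bsum γ x (j+1) (i+1)
      = (1-γ) * x (i+1) * bsum γ x j (i+1) + γ * x i * bsum γ x j i + bsum γ x (j+1) i := by
  have expand : ∀ g ∈ Finset.range (j+2),
      γ^g * (1-γ)^(j+1-g) * esym x g (i+1) * hsym x (j+1-g) (i+1)
        = (γ^g * (1-γ)^(j+1-g) * esym x g i * hsym x (j+1-g) i
            + x i * (γ^g * (1-γ)^(j+1-g) *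
                (if g = 0 then 0 else esym x (g-1) i) * hsym x (j+1-g) i))
          + x (i+1) * (γ^g * (1-γ)^(j+1-g) * esym x g (i+1) *
                (if j+1-g = 0 then 0 else hsym x (j-g) (i+1))) := by
    intro g _
    have h1 : (j+1-g) - 1 = j - g := by omega
    rw [hsym_succ (j+1-g) i, esym_succ g i, h1]
    ring
  have step0 : bsum γ x (j+1) (i+1)
      = (bsum γ x (j+1) i
          + x i * ∑ g ∈ Finset.range (j+2), γ^g * (1-γ)^(j+1-g) *
              (if g = 0 then 0 else esym x (g-1) i) * hsym x (j+1-g) i)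
        + x (i+1) * ∑ g ∈ Finset.range (j+2), γ^g * (1-γ)^(j+1-g) * esym x g (i+1) *
              (if j+1-g = 0 then 0 else hsym x (j-g) (i+1)) := by
    unfold bsum
    rw [Finset.sum_congr rfl expand, Finset.sum_add_distrib, Finset.sum_add_distrib,
      ← Finset.mul_sum, ← Finset.mul_sum]
  have sumE : ∑ g ∈ Finset.range (j+2), γ^g * (1-γ)^(j+1-g) *
      (if g = 0 then 0 else esym x (g-1) i) * hsym x (j+1-g) i = γ * bsum γ x j i := by
    rw [Finset.sum_range_succ']
    have h0 : (γ^(0:ℕ) * (1-γ)^(j+1-0) * if (0:ℕ) = 0 then 0 else esym x (0-1) i)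
        * hsym x (j+1-0) i = 0 := by simp
    rw [h0, add_zero]
    have : ∀ g ∈ Finset.range (j+1), (γ^(g+1) * (1-γ)^(j+1-(g+1)) *
        if g+1 = 0 then 0 else esym x (g+1-1) i) * hsym x (j+1-(g+1)) i
        = γ * (γ^g * (1-γ)^(j-g) * esym x g i * hsym x (j-g) i) := by
      intro g _
      have h2 : j + 1 - (g+1) = j - g := by omega
      have h4 : g + 1 - 1 = g := by omega
      rw [if_neg (Nat.succ_ne_zero g), h2, h4, pow_succ]
      ring
    rw [Finset.sum_congr rfl this, ← Finset.mul_sum]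
    simp [bsum]
  have sumH : ∑ g ∈ Finset.range (j+2), γ^g * (1-γ)^(j+1-g) * esym x g (i+1) *
      (if j+1-g = 0 then 0 else hsym x (j-g) (i+1)) = (1-γ) * bsum γ x j (i+1) := by
    rw [Finset.sum_range_succ]
    have hlast : j + 1 - (j+1) = 0 := by omega
    rw [hlast, if_pos rfl, mul_zero, add_zero]
    have : ∀ g ∈ Finset.range (j+1), γ^g * (1-γ)^(j+1-g) * esym x g (i+1) *
        (if j+1-g = 0 then 0 else hsym x (j-g) (i+1))
        = (1-γ) * (γ^g * (1-γ)^(j-g) * esym x g (i+1) * hsym x (j-g) (i+1)) := by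
      intro g hg
      rw [Finset.mem_range] at hg
      have h3 : j + 1 - g = (j - g) + 1 := by omega
      rw [if_neg (by omega), h3, pow_succ]
      ring
    rw [Finset.sum_congr rfl this, ← Finset.mul_sum]
    simp [bsum]
  rw [step0, sumE, sumH]; ring


lemma esym_zero (i : ℕ) : esym x 0 i = 1 := by
  cases i <;> simp [esym]

lemma esym_le (hx : ∀ l, 0 ≤ x l) :
    ∀ i g, (g.factorial : ℝ) * esym x g i ≤ (∑ l ∈ Finset.range i, x l)^g := by
  intro i
  induction i with
  | zero =>
    intro g
    cases g with
    | zero => simp [esym_zero]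
    | succ g => rw [esym.eq_def]; simp
  | succ i ih =>
    intro g
    have hS : 0 ≤ ∑ l ∈ Finset.range i, x l := Finset.sum_nonneg fun l _ => hx l
    cases g with
    | zero => simp [esym_zero]
    | succ g =>
      rw [Finset.sum_range_succ, esym]
      have hfs : ((g+1).factorial : ℝ) = ((g:ℝ)+1) * (g.factorial : ℝ) := by
        rw [Nat.factorial_succ]; push_cast; ring
      have hA := ih (g+1)
      have hB := ih g
      have hBm : ((g:ℝ)+1) * (x i) * ((g.factorial : ℝ) * esym x g i)
          ≤ ((g:ℝ)+1) * (x i) * (∑ l ∈ Finset.range i, x l)^g :=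
        mul_le_mul_of_nonneg_left hB (mul_nonneg (by positivity) (hx i))
      have hpa := pow_add_le (∑ l ∈ Finset.range i, x l) (x i) hS (hx i) g
      rw [hfs] at hA
      rw [hfs]
      nlinarith [hA, hBm, hpa]

lemma hsym_le (hx : ∀ l, 0 ≤ x l) :
    ∀ i m, hsym x m i ≤ (∑ l ∈ Finset.range (i+1), x l)^m := by
  intro i
  induction i with
  | zero => intro m; rw [hsym_zero, Finset.sum_range_one]
  | succ i ih =>
    intro m
    induction m with
    | zero => simp [hsym]
    | succ m ihm =>
      rw [hsym]
      have hΘi : 0 ≤ ∑ l ∈ Finset.range (i+1), x l := Finset.sum_nonneg fun l _ => hx l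
      have hle : ∑ l ∈ Finset.range (i+1), x l ≤ ∑ l ∈ Finset.range (i+2), x l := by
        rw [Finset.sum_range_succ (n := i+1)]
        have := hx (i+1)
        linarith
      have hΘ : 0 ≤ ∑ l ∈ Finset.range (i+2), x l := le_trans hΘi hle
      have h1 : hsym x (m+1) i ≤ (∑ l ∈ Finset.range (i+1), x l)^(m+1) := ih (m+1)
      have h2 : hsym x m (i+1) ≤ (∑ l ∈ Finset.range (i+2), x l)^m := ihm
      have h3 : (∑ l ∈ Finset.range (i+1), x l)^m ≤ (∑ l ∈ Finset.range (i+2), x l)^m :=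
        pow_le_pow_left₀ hΘi hle m
      have h4 : (∑ l ∈ Finset.range (i+2), x l)^(m+1)
          = ((∑ l ∈ Finset.range (i+1), x l) + x (i+1)) * (∑ l ∈ Finset.range (i+2), x l)^m := by
        rw [← Finset.sum_range_succ x (i+1)]; ring
      have h5 : 0 ≤ (∑ l ∈ Finset.range (i+2), x l)^m := pow_nonneg hΘ m
      have h6 : hsym x m (i+1) * x (i+1) ≤ (∑ l ∈ Finset.range (i+2), x l)^m * x (i+1) :=
        mul_le_mul_of_nonneg_right h2 (hx (i+1))
      have h7 : (∑ l ∈ Finset.range (i+1), x l)^(m+1)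
          ≤ (∑ l ∈ Finset.range (i+1), x l) * (∑ l ∈ Finset.range (i+2), x l)^m := by
        rw [pow_succ']
        exact mul_le_mul_of_nonneg_left h3 hΘi
      rw [h4]
      nlinarith [h1, h6, h7]

lemma bsum_nonneg (hx : ∀ l, 0 ≤ x l) {γ : ℝ} (hγ0 : 0 ≤ γ) (hγ1 : γ ≤ 1) (j i : ℕ) :
    0 ≤ bsum γ x j i := by
  apply Finset.sum_nonneg
  intro g _
  have h1 : (0:ℝ) ≤ 1 - γ := by linarith
  exact mul_nonneg (mul_nonneg (mul_nonneg (pow_nonneg hγ0 g) (pow_nonneg h1 _))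
    (esym_nonneg hx g i)) (hsym_nonneg hx _ i)

lemma bsum_mono (hx : ∀ l, 0 ≤ x l) {γ : ℝ} (hγ0 : 0 ≤ γ) (hγ1 : γ ≤ 1) (j : ℕ)
    {i i' : ℕ} (hii : i ≤ i') : bsum γ x j i ≤ bsum γ x j i' := by
  apply Finset.sum_le_sum
  intro g _
  have h1 : (0:ℝ) ≤ 1 - γ := by linarith
  have hE := esym_mono_le hx g hii
  have hH := hsym_mono_le hx (j-g) hii
  have c1 : (0:ℝ) ≤ γ^g * (1-γ)^(j-g) := mul_nonneg (pow_nonneg hγ0 g) (pow_nonneg h1 _)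
  calc γ^g * (1-γ)^(j-g) * esym x g i * hsym x (j-g) i
      ≤ γ^g * (1-γ)^(j-g) * esym x g i' * hsym x (j-g) i' := by
        apply mul_le_mul (mul_le_mul_of_nonneg_left hE c1) hH
          (hsym_nonneg hx _ _)
          (mul_nonneg c1 (esym_nonneg hx _ _))

lemma bsum_le (hx : ∀ l, 0 ≤ x l) {γ : ℝ} (hγ0 : 0 ≤ γ) (hγ1 : γ < 1) (j i : ℕ) :
    bsum γ x j i ≤ (1-γ)^j * (∑ l ∈ Finset.range (i+1), x l)^j * Real.exp (γ/(1-γ)) := by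
  have hθ : 0 ≤ ∑ l ∈ Finset.range (i+1), x l := Finset.sum_nonneg fun l _ => hx l
  have h1γ : (0:ℝ) < 1-γ := by linarith
  have key : ∀ g ∈ Finset.range (j+1),
      γ^g * (1-γ)^(j-g) * esym x g i * hsym x (j-g) i
        ≤ (1-γ)^j * (∑ l ∈ Finset.range (i+1), x l)^j *
            ((γ/(1-γ))^g / (g.factorial : ℝ)) := by
    intro g hg
    rw [Finset.mem_range] at hg
    have hgj : g ≤ j := by omega
    have hSi : 0 ≤ ∑ l ∈ Finset.range i, x l := Finset.sum_nonneg fun l _ => hx l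
    have hile : ∑ l ∈ Finset.range i, x l ≤ ∑ l ∈ Finset.range (i+1), x l := by
      rw [Finset.sum_range_succ]
      have := hx i
      linarith
    have hfpos : (0:ℝ) < (g.factorial : ℝ) := by positivity
    have hE : esym x g i ≤ (∑ l ∈ Finset.range (i+1), x l)^g / (g.factorial : ℝ) := by
      rw [le_div_iff₀ hfpos]
      calc esym x g i * (g.factorial : ℝ) = (g.factorial : ℝ) * esym x g i := by ring
        _ ≤ (∑ l ∈ Finset.range i, x l)^g := esym_le hx i g
        _ ≤ (∑ l ∈ Finset.range (i+1), x l)^g := pow_le_pow_left₀ hSi hile g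
    have hH : hsym x (j-g) i ≤ (∑ l ∈ Finset.range (i+1), x l)^(j-g) := hsym_le hx i (j-g)
    have c1 : (0:ℝ) ≤ γ^g * (1-γ)^(j-g) := mul_nonneg (pow_nonneg hγ0 g) (pow_nonneg h1γ.le _)
    have step1 : γ^g * (1-γ)^(j-g) * esym x g i * hsym x (j-g) i
        ≤ γ^g * (1-γ)^(j-g) * ((∑ l ∈ Finset.range (i+1), x l)^g / (g.factorial : ℝ))
            * (∑ l ∈ Finset.range (i+1), x l)^(j-g) := by
      apply mul_le_mul (mul_le_mul_of_nonneg_left hE c1) hH (hsym_nonneg hx _ _)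
        (mul_nonneg c1 (by positivity))
    have e1 : (1-γ)^j = (1-γ)^(j-g) * (1-γ)^g := by
      rw [← pow_add]; congr 1; omega
    have e2 : (∑ l ∈ Finset.range (i+1), x l)^j
        = (∑ l ∈ Finset.range (i+1), x l)^g * (∑ l ∈ Finset.range (i+1), x l)^(j-g) := by
      rw [← pow_add]; congr 1; omega
    have e3 : (1-γ)^j * (∑ l ∈ Finset.range (i+1), x l)^j * ((γ/(1-γ))^g / (g.factorial : ℝ))
        = γ^g * (1-γ)^(j-g) * ((∑ l ∈ Finset.range (i+1), x l)^g / (g.factorial : ℝ))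
            * (∑ l ∈ Finset.range (i+1), x l)^(j-g) := by
      rw [e1, e2, div_pow]
      field_simp
    rw [e3]
    exact step1
  calc bsum γ x j i
      ≤ ∑ g ∈ Finset.range (j+1), (1-γ)^j * (∑ l ∈ Finset.range (i+1), x l)^j *
          ((γ/(1-γ))^g / (g.factorial : ℝ)) := Finset.sum_le_sum key
    _ = (1-γ)^j * (∑ l ∈ Finset.range (i+1), x l)^j *
          ∑ g ∈ Finset.range (j+1), ((γ/(1-γ))^g / (g.factorial : ℝ)) := by
        rw [Finset.mul_sum]
    _ ≤ (1-γ)^j * (∑ l ∈ Finset.range (i+1), x l)^j * Real.exp (γ/(1-γ)) := by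
        apply mul_le_mul_of_nonneg_left (Real.sum_le_exp_of_nonneg (by positivity) _)
        positivity

end CapAux


set_option maxHeartbeats 1000000 in
open CapAux in
/-- **Capacity region for the learning rate `1 - f(l) ≤ d/(l+2)²` (Corollary 1).** -/
theorem capacity_region_quadratic_learning
    (p h γ : ℝ) (hp : 0 < p) (hh : 0 ≤ h) (hph : p + h ≤ 1)
    (hγ0 : 0 < γ) (hγ1 : γ < 1)
    (f : ℕ → ℝ) (hf0 : ∀ l, 0 ≤ f l) (hf1 : ∀ l, f l ≤ 1)
    (α : ℕ → ℝ)
    (hα : ∀ l, α l = p * (1 - f l) / (γ + (1 - γ) * (p + h) * (1 - f l)))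
    (pr : ℕ → ℕ → ℝ)
    (hpr00 : pr 0 0 = 1)
    (hpr0 : ∀ i, pr 0 (i + 1) = (1 - α i) * pr 0 i)
    (hprj0 : ∀ j, pr (j + 1) 0 = ((1 - γ) * α 0) ^ (j + 1))
    (hprrec : ∀ j i, pr (j + 1) (i + 1) =
      (1 - γ) * α (i + 1) * pr j (i + 1) + γ * α i * pr j i + (1 - α i) * pr (j + 1) i)
    (d : ℝ) (hd : 0 < d)
    (hfd : ∀ l : ℕ, 1 - f l ≤ d / ((l : ℝ) + 2) ^ 2)
    (hpd : p * d * (1 - γ) / γ < 1)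
    (q : ℝ) (hq : q = 1 / Real.log (γ / (p * d * (1 - γ))))
    (k : ℕ) (hk : 1 ≤ k)
    (s t : ℝ) (hs : 0 ≤ s) (ht : 0 ≤ t)
    (hcond1 : t * γ * Real.log 2 / (1 - γ) ≤ (k : ℝ) - γ / (1 - γ))
    (hcond2 : s * q * Real.log 2 + t * q * Real.log 2 * (1 + 1 / (1 - γ)) ≤
      (k : ℝ) + q * (-(1 / (1 - γ)) + Real.log (1 / (1 - γ))))
    (T : ℕ) (hT1 : 1 ≤ T) (hT2 : (T : ℝ) ≤ (2 : ℝ) ^ t) :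
    ∑ i ∈ Finset.range T, α i * pr (k - 1) i ≤ (2 : ℝ) ^ (-s) := by
  have h1γ : (0:ℝ) < 1 - γ := by linarith
  have hl2 : (0.6931471803 : ℝ) < Real.log 2 := Real.log_two_gt_d9
  set xf : ℕ → ℝ := fun l => 1/((l:ℝ)+2)^2 with hxf_def
  have hxf : ∀ l, 0 ≤ xf l := fun l => by positivity
  have hxfpos : ∀ l, 0 < xf l := fun l => by positivity
  set c : ℝ := p * d / γ with hc_def
  have hc : 0 < c := by positivity
  -- bounds on α
  have hα0 : ∀ l, 0 ≤ α l := by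
    intro l
    rw [hα l]
    have h2 : 0 ≤ 1 - f l := by linarith [hf1 l]
    have h3 : 0 ≤ (1-γ) * (p+h) * (1 - f l) := by positivity
    apply div_nonneg (by positivity) (by linarith)
  have hα1 : ∀ l, α l ≤ 1 := by
    intro l
    rw [hα l]
    have h2 : 0 ≤ 1 - f l := by linarith [hf1 l]
    have h4 : 1 - f l ≤ 1 := by linarith [hf0 l]
    have h3 : 0 ≤ (1-γ) * (p+h) * (1 - f l) := by positivity
    rw [div_le_one (by linarith)]
    have hp1 : p ≤ 1 := by linarith
    have hA : p * (1 - f l) ≤ 1 := mul_le_one₀ hp1 h2 h4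
    have hC : γ * (p * (1 - f l)) ≤ γ * 1 := mul_le_mul_of_nonneg_left hA hγ0.le
    have hB : (1-γ) * (p * (1 - f l)) ≤ (1-γ) * ((p+h) * (1 - f l)) :=
      mul_le_mul_of_nonneg_left
        (mul_le_mul_of_nonneg_right (by linarith) h2) h1γ.le
    nlinarith [hB, hC]
  have hαc : ∀ l, α l ≤ c * xf l := by
    intro l
    rw [hα l]
    have h2 : 0 ≤ 1 - f l := by linarith [hf1 l]
    have h3 : 0 ≤ (1-γ) * (p+h) * (1 - f l) := by positivity
    have h5 : p * (1 - f l) / (γ + (1-γ) * (p+h) * (1 - f l)) ≤ p * (1 - f l) / γ :=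
      div_le_div_of_nonneg_left (by positivity) hγ0 (by linarith)
    have h6 : p * (1 - f l) / γ ≤ p * (d / ((l:ℝ)+2)^2) / γ := by
      apply (div_le_div_iff_of_pos_right hγ0).mpr
      exact mul_le_mul_of_nonneg_left (hfd l) hp.le
    have h7 : p * (d / ((l:ℝ)+2)^2) / γ = c * xf l := by
      simp only [hxf_def, hc_def]
      field_simp
    linarith
  -- majorant
  set Bf : ℕ → ℕ → ℝ := fun j i => c^j * bsum γ xf j i with hBf_def
  have hBf0 : ∀ j i, 0 ≤ Bf j i := fun j i =>
    mul_nonneg (pow_nonneg hc.le j) (bsum_nonneg hxf hγ0.le hγ1.le j i)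
  have hBfrec : ∀ j i, Bf (j+1) (i+1)
      = (1-γ) * (c * xf (i+1)) * Bf j (i+1) + γ * (c * xf i) * Bf j i + Bf (j+1) i := by
    intro j i
    simp only [hBf_def]
    rw [bsum_rec]
    ring
  have hprB : ∀ j i, pr j i ≤ Bf j i := by
    intro j
    induction j with
    | zero =>
      have h01 : ∀ i, 0 ≤ pr 0 i ∧ pr 0 i ≤ 1 := by
        intro i
        induction i with
        | zero => rw [hpr00]; norm_num
        | succ i ih =>
          rw [hpr0 i]
          constructor
          · apply mul_nonneg _ ih.1
            linarith [hα1 i]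
          · apply mul_le_one₀ _ ih.1 _
            · linarith [hα0 i]
            · exact ih.2
      intro i
      have hB1 : Bf 0 i = 1 := by
        simp [hBf_def, bsum, esym_zero, hsym]
      rw [hB1]
      exact (h01 i).2
    | succ j ihj =>
      intro i
      induction i with
      | zero =>
        rw [hprj0 j]
        have h1 : ((1-γ) * α 0)^(j+1) ≤ ((1-γ) * (c * xf 0))^(j+1) := by
          apply pow_le_pow_left₀ (mul_nonneg h1γ.le (hα0 0))
          exact mul_le_mul_of_nonneg_left (hαc 0) h1γ.le
        have h2 : Bf (j+1) 0 = ((1-γ) * (c * xf 0))^(j+1) := by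
          have hz : ∀ b ∈ Finset.range (j+1+1), b ≠ 0 →
              γ^b * (1-γ)^(j+1-b) * esym xf b 0 * hsym xf (j+1-b) 0 = 0 := by
            intro b _ hb
            obtain ⟨b', rfl⟩ := Nat.exists_eq_succ_of_ne_zero hb
            have he : esym xf (b'+1) 0 = 0 := by simp [esym]
            rw [he]
            ring
          simp only [hBf_def]
          rw [bsum, Finset.sum_eq_single 0 hz
            (fun habs => absurd (Finset.mem_range.mpr (by omega)) habs)]
          rw [esym_zero, hsym_zero]
          simp only [pow_zero, Nat.sub_zero, one_mul, mul_one]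
          rw [mul_pow, mul_pow]
          ring
        rw [h2]
        exact h1
      | succ i ihi =>
        rw [hprrec j i, hBfrec j i]
        have t1 : (1-γ) * α (i+1) * pr j (i+1) ≤ (1-γ) * (c * xf (i+1)) * Bf j (i+1) := by
          have a1 : α (i+1) * pr j (i+1) ≤ (c * xf (i+1)) * Bf j (i+1) :=
            calc α (i+1) * pr j (i+1) ≤ α (i+1) * Bf j (i+1) :=
                  mul_le_mul_of_nonneg_left (ihj (i+1)) (hα0 (i+1))
              _ ≤ (c * xf (i+1)) * Bf j (i+1) :=
                  mul_le_mul_of_nonneg_right (hαc (i+1)) (hBf0 j (i+1))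
          calc (1-γ) * α (i+1) * pr j (i+1) = (1-γ) * (α (i+1) * pr j (i+1)) := by ring
            _ ≤ (1-γ) * ((c * xf (i+1)) * Bf j (i+1)) := mul_le_mul_of_nonneg_left a1 h1γ.le
            _ = (1-γ) * (c * xf (i+1)) * Bf j (i+1) := by ring
        have t2 : γ * α i * pr j i ≤ γ * (c * xf i) * Bf j i := by
          have a1 : α i * pr j i ≤ (c * xf i) * Bf j i :=
            calc α i * pr j i ≤ α i * Bf j i :=
                  mul_le_mul_of_nonneg_left (ihj i) (hα0 i)
              _ ≤ (c * xf i) * Bf j i :=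
                  mul_le_mul_of_nonneg_right (hαc i) (hBf0 j i)
          calc γ * α i * pr j i = γ * (α i * pr j i) := by ring
            _ ≤ γ * ((c * xf i) * Bf j i) := mul_le_mul_of_nonneg_left a1 hγ0.le
            _ = γ * (c * xf i) * Bf j i := by ring
        have t3 : (1 - α i) * pr (j+1) i ≤ Bf (j+1) i := by
          calc (1 - α i) * pr (j+1) i ≤ (1 - α i) * Bf (j+1) i :=
                mul_le_mul_of_nonneg_left ihi (by linarith [hα1 i])
            _ ≤ 1 * Bf (j+1) i :=
                mul_le_mul_of_nonneg_right (by linarith [hα0 i]) (hBf0 (j+1) i)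
            _ = Bf (j+1) i := by ring
        linarith
  -- sum bound
  set K : ℕ := k - 1 with hK_def
  have hkK : k = K + 1 := by omega
  set θ : ℝ := ∑ i ∈ Finset.range T, xf i with hθ_def
  have hθpos : 0 < θ := by
    apply Finset.sum_pos (fun l _ => hxfpos l)
    exact Finset.nonempty_range_iff.mpr (by omega)
  have hθ1 : θ ≤ 1 := theta_le_one T
  set u : ℝ := γ / (1-γ) with hu_def
  have hu : 0 ≤ u := by positivity
  have hsum : ∑ i ∈ Finset.range T, α i * pr K i
      ≤ c * θ * (c^K * ((1-γ)^K * θ^K * Real.exp u)) := by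
    have hBle : Bf K (T-1) ≤ c^K * ((1-γ)^K * θ^K * Real.exp u) := by
      have hb := bsum_le hxf hγ0.le hγ1 K (T-1)
      have hr : T - 1 + 1 = T := by omega
      rw [hr] at hb
      simp only [hBf_def]
      exact mul_le_mul_of_nonneg_left hb (pow_nonneg hc.le K)
    have h_each : ∀ i ∈ Finset.range T, α i * pr K i ≤ (c * xf i) * Bf K (T-1) := by
      intro i hi
      rw [Finset.mem_range] at hi
      have hiT : i ≤ T - 1 := by omega
      have hBmono : Bf K i ≤ Bf K (T-1) := by
        simp only [hBf_def]
        exact mul_le_mul_of_nonneg_left (bsum_mono hxf hγ0.le hγ1.le K hiT)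
          (pow_nonneg hc.le K)
      calc α i * pr K i ≤ α i * Bf K i := mul_le_mul_of_nonneg_left (hprB K i) (hα0 i)
        _ ≤ (c * xf i) * Bf K i := mul_le_mul_of_nonneg_right (hαc i) (hBf0 K i)
        _ ≤ (c * xf i) * Bf K (T-1) := mul_le_mul_of_nonneg_left hBmono (by positivity)
    calc ∑ i ∈ Finset.range T, α i * pr K i
        ≤ ∑ i ∈ Finset.range T, (c * xf i) * Bf K (T-1) := Finset.sum_le_sum h_each
      _ = (c * θ) * Bf K (T-1) := by
          rw [← Finset.sum_mul, hθ_def, ← Finset.mul_sum]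
      _ ≤ (c * θ) * (c^K * ((1-γ)^K * θ^K * Real.exp u)) := by
          apply mul_le_mul_of_nonneg_left hBle (mul_pos hc hθpos).le
      _ = c * θ * (c^K * ((1-γ)^K * θ^K * Real.exp u)) := by ring
  -- the numeric endgame
  set A : ℝ := c^(K+1) * (1-γ)^K * θ^(K+1) * Real.exp u with hA_def
  have hsumA : ∑ i ∈ Finset.range T, α i * pr K i ≤ A := by
    calc ∑ i ∈ Finset.range T, α i * pr K i
        ≤ c * θ * (c^K * ((1-γ)^K * θ^K * Real.exp u)) := hsum
      _ = A := by rw [hA_def]; ring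
  have hApos : 0 < A := by
    rw [hA_def]
    exact mul_pos (mul_pos (mul_pos (pow_pos hc _) (pow_pos h1γ _)) (pow_pos hθpos _))
      (Real.exp_pos u)
  -- logs
  set l2 : ℝ := Real.log 2 with hl2_def
  set lc : ℝ := Real.log c with hlc_def
  set l1 : ℝ := Real.log (1-γ) with hl1_def
  set lθ : ℝ := Real.log θ with hlθ_def
  set L : ℝ := Real.log (γ / (p * d * (1-γ))) with hL_def
  have hpd0 : 0 < p * d * (1-γ) := by positivity
  have hLpos : 0 < L := by
    rw [hL_def]
    apply Real.log_pos
    rw [lt_div_iff₀ hpd0]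
    have := (div_lt_one hγ0).mp hpd
    linarith
  have hLe : L = -(lc + l1) := by
    rw [hL_def, hlc_def, hl1_def]
    have e1 : γ / (p * d * (1-γ)) = (c * (1-γ))⁻¹ := by
      rw [hc_def]
      field_simp
    rw [e1, Real.log_inv, Real.log_mul (ne_of_gt hc) (ne_of_gt h1γ)]
  have hloginv : Real.log (1 / (1-γ)) = -l1 := by
    rw [one_div, Real.log_inv, hl1_def]
  have hq2 : s * l2 + t * l2 * (1 + 1/(1-γ)) ≤ (k:ℝ) * L + (-(1/(1-γ)) + -l1) := by
    have hLne : L ≠ 0 := ne_of_gt hLpos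
    have h := mul_le_mul_of_nonneg_right hcond2 hLpos.le
    have e4 : (s * q * Real.log 2 + t * q * Real.log 2 * (1 + 1/(1-γ))) * L
        = s * l2 + t * l2 * (1 + 1/(1-γ)) := by
      rw [hq, hl2_def]
      field_simp
    have e5 : ((k:ℝ) + q * (-(1/(1-γ)) + Real.log (1/(1-γ)))) * L
        = (k:ℝ) * L + (-(1/(1-γ)) + -l1) := by
      rw [hq, hloginv]
      field_simp
    rw [e4, e5] at h
    exact h
  -- KEY inequality
  have h1u : 1 + u = 1/(1-γ) := by
    rw [hu_def]
    field_simp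
    ring
  have KEY : ((K:ℝ)+1) * lθ - 2 * l1 ≤ t * l2 * (1 + 1/(1-γ)) + 1 := by
    have hlog1u : Real.log (1+u) = -l1 := by rw [h1u, hloginv]
    rcases eq_or_lt_of_le hT1 with hT | hT
    · -- T = 1
      have hTe : T = 1 := hT.symm
      have hθ4 : θ = 1/4 := by
        rw [hθ_def, hTe]
        simp [hxf_def]
        norm_num
      have hlθ4 : lθ = -(2 * l2) := by
        rw [hlθ_def, hθ4, hl2_def,
          show (1:ℝ)/4 = ((2:ℝ)^(2:ℕ))⁻¹ by norm_num, Real.log_inv, Real.log_pow]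
        push_cast
        ring
      have hku : u ≤ (K:ℝ) + 1 := by
        have h8 : 0 ≤ t * γ * l2 / (1-γ) := by
          apply div_nonneg _ h1γ.le
          have : (0:ℝ) ≤ l2 := by rw [hl2_def]; linarith
          exact mul_nonneg (mul_nonneg ht hγ0.le) this
        have h9 : (k:ℝ) = (K:ℝ) + 1 := by rw [hkK]; push_cast; ring
        rw [hu_def]
        rw [h9] at hcond1
        linarith
      have hA2 := two_log_le_A hu
      rw [hlog1u] at hA2
      have htt : 0 ≤ t * l2 * (1 + 1/(1-γ)) := by
        have : (0:ℝ) < 1 + 1/(1-γ) := by positivity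
        have hl2p : (0:ℝ) ≤ l2 := by rw [hl2_def]; linarith
        positivity
      rw [hlθ4]
      have hmul2 : u * (2*l2) ≤ ((K:ℝ)+1) * (2*l2) :=
        mul_le_mul_of_nonneg_right hku (by rw [hl2_def]; linarith)
      linarith [hA2, hmul2, htt]
    · -- T ≥ 2
      have hT2' : 2 ≤ T := hT
      have hlθ0 : lθ ≤ 0 := by
        rw [hlθ_def]
        exact Real.log_nonpos hθpos.le hθ1
      have hKθ : ((K:ℝ)+1) * lθ ≤ 0 :=
        mul_nonpos_of_nonneg_of_nonpos (by positivity) hlθ0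
      have hU1 : (1:ℝ) ≤ 1/(1-γ) := by
        rw [le_div_iff₀ h1γ]
        linarith
      have hB2 := two_log_le_B hU1
      rw [hloginv] at hB2
      have htl2 : l2 ≤ t * l2 := by
        have ha : Real.log 2 ≤ Real.log (T:ℝ) := by
          apply Real.log_le_log (by norm_num)
          exact_mod_cast hT2'
        have hb : Real.log (T:ℝ) ≤ t * Real.log 2 := by
          calc Real.log (T:ℝ) ≤ Real.log ((2:ℝ)^t) := by
                apply Real.log_le_log (by positivity) hT2
            _ = t * Real.log 2 := Real.log_rpow (by norm_num) t
        rw [hl2_def]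
        linarith
      have hmul : l2 * (1 + 1/(1-γ)) ≤ t * l2 * (1 + 1/(1-γ)) := by
        apply mul_le_mul_of_nonneg_right htl2
        positivity
      linarith
  -- conclude
  have hgoal2 : A ≤ (2:ℝ) ^ (-s) := by
    rw [Real.rpow_def_of_pos (by norm_num : (0:ℝ) < 2)]
    rw [← Real.exp_log hApos]
    apply Real.exp_le_exp.mpr
    have hlogA : Real.log A = ((K:ℝ)+1) * lc + (K:ℝ) * l1 + ((K:ℝ)+1) * lθ + u := by
      rw [hA_def]
      rw [Real.log_mul (mul_pos (mul_pos (pow_pos hc _) (pow_pos h1γ _)) (pow_pos hθpos _)).ne' (Real.exp_ne_zero u),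
        Real.log_mul (mul_pos (pow_pos hc _) (pow_pos h1γ _)).ne' (pow_pos hθpos _).ne',
        Real.log_mul (pow_pos hc _).ne' (pow_pos h1γ _).ne',
        Real.log_pow, Real.log_pow, Real.log_pow, Real.log_exp,
        hlc_def, hl1_def, hlθ_def]
      push_cast
      ring
    rw [hlogA]
    have h9 : (k:ℝ) = (K:ℝ) + 1 := by rw [hkK]; push_cast; ring
    rw [h9, hLe] at hq2
    have hu1 : u = 1/(1-γ) - 1 := by
      rw [hu_def]
      field_simp
      ring
    linarith [hq2, KEY, hu1]
  linarith [hsumA, hgoal2]
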